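/- Let A be a convex subset C of a Euclidean space, π orthogonal projection onto a subspace U. For every convex subset X ⊆ C, the normal cone of π(C) at π(X) equals N_C(X) ∩ U. -/

import Mathlib

open RealInnerProductSpace

/-- A relative interior point `x` of `S` can "see beyond" any point `z ∈ S`. -/
lemma intrinsicInterior_sees_beyond {E : Type*} [NormedAddCommGroup E] [NormedSpace ℝ E]
    {S : Set E} {x z : E} (hx : x ∈ intrinsicInterior ℝ S) (hz : z ∈ S) :
    ∃ ε : ℝ, 0 < ε ∧ x + ε • (x - z) ∈ S := by
  obtain ⟨p, hp, hpx⟩ := hx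
  have hzspan : z ∈ affineSpan ℝ S := subset_affineSpan ℝ S hz
  have hxspan : x ∈ affineSpan ℝ S := hpx ▸ p.2
  have hmem : ∀ t : ℝ, x + t • (x - z) ∈ affineSpan ℝ S := by
    intro t
    have := (affineSpan ℝ S).smul_vsub_vadd_mem t hxspan hzspan hxspan
    simpa [vsub_eq_sub, vadd_eq_add, add_comm] using this
  set f : ℝ → affineSpan ℝ S := fun t => ⟨x + t • (x - z), hmem t⟩ with hf_def
  have hf : Continuous f := by
    apply Continuous.subtype_mk
    continuity
  have h0 : f 0 = p := Subtype.ext (by simp [hf_def, hpx])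
  have hopen : IsOpen (f ⁻¹' interior ((↑) ⁻¹' S : Set (affineSpan ℝ S))) :=
    isOpen_interior.preimage hf
  have h0mem : (0 : ℝ) ∈ f ⁻¹' interior ((↑) ⁻¹' S : Set (affineSpan ℝ S)) := by
    simp only [Set.mem_preimage, h0]; exact hp
  obtain ⟨δ, hδ, hball⟩ := Metric.isOpen_iff.mp hopen 0 h0mem
  refine ⟨δ / 2, by linarith, ?_⟩
  have hmem2 : f (δ / 2) ∈ interior ((↑) ⁻¹' S : Set (affineSpan ℝ S)) := by
    apply hball
    rw [Metric.mem_ball, Real.dist_eq, sub_zero, abs_of_pos (by linarith)]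
    linarith
  have h2 : f (δ / 2) ∈ ((↑) ⁻¹' S : Set (affineSpan ℝ S)) := interior_subset hmem2
  exact h2

/-- The normal cone of `C` at a convex subset `X ⊆ C`: the (inward) normal vectors of `C`
at the points of the relative interior (intrinsic interior) of `X`.  For nonempty convex
`X` this is the normal cone `N_C(x)` at any relative interior point `x` of `X`, and for
`X = ∅` it is the whole space. -/
def normalCone {E : Type*} [NormedAddCommGroup E] [InnerProductSpace ℝ E]
    (C X : Set E) : Set E :=
  {u | ∀ x ∈ intrinsicInterior ℝ X, ∀ y ∈ C, 0 ≤ ⟪y - x, u⟫}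

/-- Let `C` be a convex subset of a Euclidean space, `π` the orthogonal
projection onto a subspace `U`.  For every convex `X ⊆ C`, the normal cone of `π(C)`
at `π(X)` (as a convex subset of `U`, i.e. intersected with `U`) equals `N_C(X) ∩ U`. -/
theorem stmt3 {E : Type*} [NormedAddCommGroup E] [InnerProductSpace ℝ E]
    [FiniteDimensional ℝ E]
    (C : Set E) (hC : Convex ℝ C) (U : Submodule ℝ E)
    (π : E → E) (hπ : ∀ x, π x = (Submodule.orthogonalProjectionOnto U x : E))
    (X : Set E) (hX : X ⊆ C) (hXc : Convex ℝ X) :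
    normalCone (π '' C) (π '' X) ∩ (U : Set E) = normalCone C X ∩ (U : Set E) := by
  -- key: for u ∈ U, inner products with differences are preserved by π
  have key : ∀ u ∈ U, ∀ a b : E, ⟪π a - π b, u⟫ = ⟪a - b, u⟫ := by
    intro u hu a b
    have h : ∀ c : E, ⟪c - π c, u⟫ = 0 := by
      intro c
      rw [hπ]
      have := Submodule.sub_starProjection_mem_orthogonal (K := U) c
      exact (Submodule.mem_orthogonal' U _).mp this u hu
    have ha := h a
    have hb := h b
    simp only [inner_sub_left] at *
    linarith
  -- π is the coercion of a linear map
  have hπlin : ∀ s : Set E, Convex ℝ s → Convex ℝ (π '' s) := by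
    intro s hs
    have : π '' s = (U.subtype.comp (Submodule.orthogonalProjectionOnto U).toLinearMap) '' s := by
      ext w; constructor <;> rintro ⟨a, ha, rfl⟩ <;> exact ⟨a, ha, by simp [hπ]⟩
    rw [this]
    exact hs.linear_image _
  ext u
  simp only [Set.mem_inter_iff, SetLike.mem_coe]
  constructor
  · rintro ⟨h1, hu⟩
    refine ⟨?_, hu⟩
    intro x hx y hy
    -- X is nonempty, so π '' X has a relative interior point x' = π x₂
    have hXne : X.Nonempty := ⟨x, intrinsicInterior_subset hx⟩
    obtain ⟨x', hx'⟩ := (hXne.image π).intrinsicInterior (hπlin X hXc)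
    obtain ⟨x₂, hx₂, hx₂'⟩ := intrinsicInterior_subset hx'
    -- normality at x₂ over all of C
    have hnorm : ∀ c ∈ C, 0 ≤ ⟪c - x₂, u⟫ := by
      intro c hc
      have := h1 x' hx' (π c) ⟨c, hc, rfl⟩
      rwa [← hx₂', key u hu] at this
    -- x' sees beyond π x in π '' X
    have hπx : π x ∈ π '' X := ⟨x, intrinsicInterior_subset hx, rfl⟩
    obtain ⟨ε, hε, hmem⟩ := intrinsicInterior_sees_beyond hx' hπx
    obtain ⟨x₃, hx₃, hx₃'⟩ := hmem
    have h2 : 0 ≤ ⟪x₃ - x₂, u⟫ := hnorm x₃ (hX hx₃)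
    have h3 : ⟪x₃ - x₂, u⟫ = ε * ⟪x₂ - x, u⟫ := by
      have : ⟪x₃ - x₂, u⟫ = ⟪π x₃ - π x₂, u⟫ := (key u hu x₃ x₂).symm
      rw [this, hx₃', hx₂']
      have : x' + ε • (x' - π x) - x' = ε • (x' - π x) := by abel
      rw [this, real_inner_smul_left, ← hx₂', key u hu]
    have h4 : 0 ≤ ⟪x₂ - x, u⟫ := by nlinarith [h3 ▸ h2]
    have h5 : 0 ≤ ⟪y - x₂, u⟫ := hnorm y hy
    have : ⟪y - x, u⟫ = ⟪y - x₂, u⟫ + ⟪x₂ - x, u⟫ := by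
      simp only [inner_sub_left, inner_add_left]; ring
    linarith [this ▸ add_nonneg h5 h4]
  · rintro ⟨h2, hu⟩
    refine ⟨?_, hu⟩
    rintro x' hx' y' ⟨y, hy, rfl⟩
    obtain ⟨x₂, hx₂, hx₂'⟩ := intrinsicInterior_subset hx'
    have hXne : X.Nonempty := ⟨x₂, hx₂⟩
    obtain ⟨x, hx⟩ := hXne.intrinsicInterior hXc
    have hnorm : ∀ c ∈ C, 0 ≤ ⟪c - x, u⟫ := fun c hc => h2 x hx c hc
    -- x sees beyond x₂ in X
    obtain ⟨ε, hε, hmem⟩ := intrinsicInterior_sees_beyond hx hx₂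
    have h3 : 0 ≤ ⟪x + ε • (x - x₂) - x, u⟫ := hnorm _ (hX hmem)
    have h4 : 0 ≤ ⟪x - x₂, u⟫ := by
      have heq : x + ε • (x - x₂) - x = ε • (x - x₂) := by abel
      rw [heq, real_inner_smul_left] at h3
      nlinarith
    have h5 : 0 ≤ ⟪y - x, u⟫ := hnorm y hy
    have heq : ⟪π y - x', u⟫ = ⟪y - x, u⟫ + ⟪x - x₂, u⟫ := by
      rw [← hx₂', key u hu]
      simp only [inner_sub_left, inner_add_left]; ring
    linarith [heq ▸ add_nonneg h5 h4]
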